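/- arXiv:2406.08462 — 7 statements merged into one kernel-verified Lean document; each statement's English description precedes it below -/
import Mathlib

section
/- Let $b_m$ for $m \in \mathbb{Z}$ be defined by $b_* = \sum_{m \in \mathbb{N}} h_{*-2mc+n}$ where $h_k = \dim H_k(B;\mathbb{Q})$ for a space $B$ with $h_k = 0$ for $k < 0$ and $k > 2n$, $h_k = h_{2n-k}$ for all $k$ (Poincaré duality), and $c \geq 1$ an integer. Then for $s$ large enough that $2sc > 2n$, one has $2\sum_{m=2c-n}^{2sc} b_m = (2s-1)\sum_k h_k + h_n + 2\sum_{m=s+1}^{2s-1} h_{n+2(s-m)c}$. -/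
open Finset

/-- Lemma A.1 (sumb_m): combinatorial identity for shifted sums of Betti numbers.
`h k` abstracts `dim H_k(B;ℚ)`; `b` is the Betti number of the prequantization homology,
`b x = ∑_{m ≥ 1} h (x - 2 m c + n)`. -/
theorem stmt_0 (n c s : ℕ) (hc : 1 ≤ c)
    (h : ℤ → ℕ) (b : ℤ → ℕ)
    (hsupp : ∀ k : ℤ, (k < 0 ∨ (2 * (n : ℤ)) < k) → h k = 0)
    (hdual : ∀ k : ℤ, h k = h (2 * (n : ℤ) - k))
    (hb : ∀ x : ℤ, b x = ∑' m : ℕ, h (x - 2 * ((m : ℤ) + 1) * (c : ℤ) + (n : ℤ)))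
    (hs : 2 * n < 2 * s * c) :
    2 * ∑ m ∈ Finset.Icc (2 * (c : ℤ) - (n : ℤ)) (2 * (s : ℤ) * (c : ℤ)), b m =
      (2 * s - 1) * ∑ k ∈ Finset.Icc (0 : ℤ) (2 * (n : ℤ)), h k + h n +
        2 * ∑ m ∈ Finset.Icc ((s : ℤ) + 1) (2 * (s : ℤ) - 1),
              h ((n : ℤ) + 2 * ((s : ℤ) - m) * (c : ℤ)) := by
  have hs1 : 1 ≤ s := by
    rcases Nat.eq_zero_or_pos s with h0 | h0
    · subst h0; simp at hs
    · exact h0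
  have hsZ : 2 * (n : ℤ) < 2 * (s : ℤ) * (c : ℤ) := by exact_mod_cast hs
  have hcZ : 1 ≤ (c : ℤ) := by exact_mod_cast hc
  have hs1Z : 1 ≤ (s : ℤ) := by exact_mod_cast hs1
  set P : ℤ → ℕ := fun U => ∑ k ∈ Icc (0 : ℤ) U, h k with hPdef
  set r : ℕ := ∑ k ∈ Icc (0 : ℤ) (2 * (n : ℤ)), h k with hrdef
  -- P vanishes on negatives
  have hP0 : ∀ U : ℤ, U < 0 → P U = 0 := by
    intro U hU
    simp only [hPdef]
    rw [Finset.Icc_eq_empty (by omega)]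
    simp
  -- P stabilizes to r
  have hPr : ∀ U : ℤ, 2 * (n : ℤ) ≤ U → P U = r := by
    intro U hU
    refine (Finset.sum_subset (Finset.Icc_subset_Icc_right hU) ?_).symm
    intro k hk hk'
    simp only [mem_Icc] at hk hk'
    exact hsupp k (by omega)
  -- sums starting below 0 equal prefix sums
  have hL1 : ∀ a U : ℤ, a ≤ 0 → ∑ k ∈ Icc a U, h k = P U := by
    intro a U ha
    refine (Finset.sum_subset (Finset.Icc_subset_Icc_left ha) ?_).symm
    intro k hk hk'
    simp only [mem_Icc] at hk hk'
    exact hsupp k (Or.inl (by omega))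
  -- the key duality identity
  have key0 : ∀ U : ℤ, (n : ℤ) ≤ U → P U + P (2 * (n : ℤ) - U) = r + h U := by
    intro U hU
    rcases lt_or_ge (2 * (n : ℤ)) U with hU2 | hU2
    · rw [hPr U (by omega), hP0 _ (by omega), hsupp U (Or.inr hU2)]
    · have hU0 : (0 : ℤ) ≤ U := le_trans (Int.natCast_nonneg n) hU
      have h1 : P (2 * (n : ℤ) - U) = ∑ k ∈ Icc U (2 * (n : ℤ)), h k := by
        refine (Finset.sum_nbij' (fun k => 2 * (n : ℤ) - k) (fun k => 2 * (n : ℤ) - k)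
          ?_ ?_ ?_ ?_ ?_).symm
        · intro a ha; simp only [mem_Icc] at *; omega
        · intro a ha; simp only [mem_Icc] at *; omega
        · intro a _; omega
        · intro a _; omega
        · intro a _; exact hdual a
      have h2 : Icc U (2 * (n : ℤ)) = insert U (Icc (U + 1) (2 * (n : ℤ))) := by
        ext k; simp only [mem_Icc, mem_insert]; omega
      have h3 : Icc (0 : ℤ) (2 * (n : ℤ)) = Icc 0 U ∪ Icc (U + 1) (2 * (n : ℤ)) := by
        ext k; simp only [mem_Icc, mem_union]; omega
      have hdisj : Disjoint (Icc (0 : ℤ) U) (Icc (U + 1) (2 * (n : ℤ))) := by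
        simp only [Finset.disjoint_left, mem_Icc]
        intro a ha ha'; omega
      have hUnot : U ∉ Icc (U + 1) (2 * (n : ℤ)) := by simp [mem_Icc]
      rw [h1, h2, Finset.sum_insert hUnot, hrdef, h3, Finset.sum_union hdisj]
      simp only [hPdef]
      ring
  have key : ∀ U : ℤ, P U + P (2 * (n : ℤ) - U) = r + h U := by
    intro U
    rcases le_or_gt (n : ℤ) U with hU | hU
    · exact key0 U hU
    · have h2 := key0 (2 * (n : ℤ) - U) (by omega)
      rw [show 2 * (n : ℤ) - (2 * (n : ℤ) - U) = U by ring] at h2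
      rw [hdual U]
      omega
  -- replace b with a finite sum
  have hbs : ∀ x ∈ Icc (2 * (c : ℤ) - (n : ℤ)) (2 * (s : ℤ) * (c : ℤ)),
      b x = ∑ i ∈ range (2 * s), h (x - 2 * ((i : ℤ) + 1) * (c : ℤ) + (n : ℤ)) := by
    intro x hx
    simp only [mem_Icc] at hx
    rw [hb x]
    refine tsum_eq_sum ?_
    intro i hi
    simp only [mem_range, not_lt] at hi
    have hiZ : 2 * (s : ℤ) ≤ (i : ℤ) := by exact_mod_cast hi
    refine hsupp _ (Or.inl ?_)
    nlinarith [hx.2, hcZ, hsZ, Int.natCast_nonneg n]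
  -- inner sums are prefix sums
  have hinner : ∀ i : ℕ,
      ∑ x ∈ Icc (2 * (c : ℤ) - (n : ℤ)) (2 * (s : ℤ) * (c : ℤ)),
        h (x - 2 * ((i : ℤ) + 1) * (c : ℤ) + (n : ℤ))
      = P ((n : ℤ) + 2 * ((s : ℤ) - (i : ℤ) - 1) * (c : ℤ)) := by
    intro i
    have hi0 : (0 : ℤ) ≤ (i : ℤ) := Int.natCast_nonneg i
    rw [← hL1 (-(2 * (i : ℤ) * (c : ℤ))) _ (by nlinarith)]
    refine Finset.sum_nbij' (fun x => x - 2 * ((i : ℤ) + 1) * (c : ℤ) + (n : ℤ))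
      (fun k => k + 2 * ((i : ℤ) + 1) * (c : ℤ) - (n : ℤ)) ?_ ?_ ?_ ?_ ?_
    · intro a ha; simp only [mem_Icc] at *
      constructor
      · nlinarith [ha.1]
      · nlinarith [ha.2]
    · intro a ha; simp only [mem_Icc] at *
      constructor
      · nlinarith [ha.1]
      · nlinarith [ha.2]
    · intro a _; ring
    · intro a _; ring
    · intro a _; rfl
  -- main sum
  have hmain : ∑ x ∈ Icc (2 * (c : ℤ) - (n : ℤ)) (2 * (s : ℤ) * (c : ℤ)), b x
      = ∑ i ∈ range (2 * s), P ((n : ℤ) + 2 * ((s : ℤ) - (i : ℤ) - 1) * (c : ℤ)) := by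
    rw [Finset.sum_congr rfl hbs, Finset.sum_comm]
    exact Finset.sum_congr rfl fun i _ => hinner i
  -- peel off the last (vanishing) term
  have hpeel : ∑ i ∈ range (2 * s), P ((n : ℤ) + 2 * ((s : ℤ) - (i : ℤ) - 1) * (c : ℤ))
      = ∑ i ∈ range (2 * s - 1), P ((n : ℤ) + 2 * ((s : ℤ) - (i : ℤ) - 1) * (c : ℤ)) := by
    conv_lhs => rw [show 2 * s = (2 * s - 1) + 1 by omega, Finset.sum_range_succ]
    have hcast : ((2 * s - 1 : ℕ) : ℤ) = 2 * (s : ℤ) - 1 := by omega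
    rw [hcast, hP0 _ (by nlinarith [Int.natCast_nonneg n]), add_zero]
  -- doubling via reflection and the key identity
  have hdouble : 2 * ∑ i ∈ range (2 * s - 1), P ((n : ℤ) + 2 * ((s : ℤ) - (i : ℤ) - 1) * (c : ℤ))
      = (2 * s - 1) * r
        + ∑ i ∈ range (2 * s - 1), h ((n : ℤ) + 2 * ((s : ℤ) - (i : ℤ) - 1) * (c : ℤ)) := by
    have hre := Finset.sum_range_reflect
      (fun i : ℕ => P ((n : ℤ) + 2 * ((s : ℤ) - (i : ℤ) - 1) * (c : ℤ))) (2 * s - 1)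
    calc 2 * ∑ i ∈ range (2 * s - 1), P ((n : ℤ) + 2 * ((s : ℤ) - (i : ℤ) - 1) * (c : ℤ))
        = ∑ i ∈ range (2 * s - 1), P ((n : ℤ) + 2 * ((s : ℤ) - (i : ℤ) - 1) * (c : ℤ))
          + ∑ i ∈ range (2 * s - 1),
              P ((n : ℤ) + 2 * ((s : ℤ) - ((2 * s - 1 - 1 - i : ℕ) : ℤ) - 1) * (c : ℤ)) := by
          rw [hre]; ring
      _ = ∑ i ∈ range (2 * s - 1),
            (P ((n : ℤ) + 2 * ((s : ℤ) - (i : ℤ) - 1) * (c : ℤ))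
              + P ((n : ℤ) + 2 * ((s : ℤ) - ((2 * s - 1 - 1 - i : ℕ) : ℤ) - 1) * (c : ℤ))) :=
          Finset.sum_add_distrib.symm
      _ = ∑ i ∈ range (2 * s - 1),
            (r + h ((n : ℤ) + 2 * ((s : ℤ) - (i : ℤ) - 1) * (c : ℤ))) := by
          refine Finset.sum_congr rfl fun i hi => ?_
          simp only [mem_range] at hi
          have hcast : ((2 * s - 1 - 1 - i : ℕ) : ℤ) = 2 * (s : ℤ) - 2 - (i : ℤ) := by omega
          have harg : (n : ℤ) + 2 * ((s : ℤ) - ((2 * s - 1 - 1 - i : ℕ) : ℤ) - 1) * (c : ℤ)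
              = 2 * (n : ℤ) - ((n : ℤ) + 2 * ((s : ℤ) - (i : ℤ) - 1) * (c : ℤ)) := by
            rw [hcast]; ring
          rw [harg]
          exact key _
      _ = (2 * s - 1) * r
          + ∑ i ∈ range (2 * s - 1), h ((n : ℤ) + 2 * ((s : ℤ) - (i : ℤ) - 1) * (c : ℤ)) := by
          rw [Finset.sum_add_distrib, Finset.sum_const, card_range, smul_eq_mul]
  -- identify the correction sum
  have hT : ∑ i ∈ range (2 * s - 1), h ((n : ℤ) + 2 * ((s : ℤ) - (i : ℤ) - 1) * (c : ℤ))
      = h n + 2 * ∑ m ∈ Icc ((s : ℤ) + 1) (2 * (s : ℤ) - 1),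
          h ((n : ℤ) + 2 * ((s : ℤ) - m) * (c : ℤ)) := by
    have hsplit : ∑ i ∈ range (2 * s - 1), h ((n : ℤ) + 2 * ((s : ℤ) - (i : ℤ) - 1) * (c : ℤ))
        = ∑ i ∈ range s, h ((n : ℤ) + 2 * ((s : ℤ) - (i : ℤ) - 1) * (c : ℤ))
          + ∑ i ∈ Ico s (2 * s - 1), h ((n : ℤ) + 2 * ((s : ℤ) - (i : ℤ) - 1) * (c : ℤ)) := by
      rw [Finset.range_eq_Ico,
        ← Finset.sum_Ico_consecutive _ (Nat.zero_le s) (by omega : s ≤ 2 * s - 1),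
        ← Finset.range_eq_Ico]
    have hfirst : ∑ i ∈ range s, h ((n : ℤ) + 2 * ((s : ℤ) - (i : ℤ) - 1) * (c : ℤ))
        = h n + ∑ d ∈ Ico 1 s, h ((n : ℤ) - 2 * (d : ℤ) * (c : ℤ)) := by
      have h1 : ∑ i ∈ range s, h ((n : ℤ) + 2 * ((s : ℤ) - (i : ℤ) - 1) * (c : ℤ))
          = ∑ i ∈ range s, h ((n : ℤ) - 2 * ((s - 1 - i : ℕ) : ℤ) * (c : ℤ)) := by
        refine Finset.sum_congr rfl fun i hi => ?_
        simp only [mem_range] at hi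
        have hcast : ((s - 1 - i : ℕ) : ℤ) = (s : ℤ) - 1 - (i : ℤ) := by omega
        rw [hdual, hcast]
        congr 1
        ring
      rw [h1, Finset.sum_range_reflect (fun d : ℕ => h ((n : ℤ) - 2 * (d : ℤ) * (c : ℤ))) s,
        Finset.range_eq_Ico, Finset.sum_eq_sum_Ico_succ_bot (by omega : 0 < s)]
      norm_num
    have hsecond : ∑ i ∈ Ico s (2 * s - 1), h ((n : ℤ) + 2 * ((s : ℤ) - (i : ℤ) - 1) * (c : ℤ))
        = ∑ d ∈ Ico 1 s, h ((n : ℤ) - 2 * (d : ℤ) * (c : ℤ)) := by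
      refine Finset.sum_nbij' (fun i => i + 1 - s) (fun d => d + s - 1) ?_ ?_ ?_ ?_ ?_
      · intro a ha; simp only [mem_Ico] at *; omega
      · intro a ha; simp only [mem_Ico] at *; omega
      · intro a ha; simp only [mem_Ico] at ha; omega
      · intro a ha; simp only [mem_Ico] at ha; omega
      · intro a ha; simp only [mem_Ico] at ha
        have hcast : ((a + 1 - s : ℕ) : ℤ) = (a : ℤ) + 1 - (s : ℤ) := by omega
        congr 1
        rw [hcast]; ring
    have hthird : ∑ m ∈ Icc ((s : ℤ) + 1) (2 * (s : ℤ) - 1),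
          h ((n : ℤ) + 2 * ((s : ℤ) - m) * (c : ℤ))
        = ∑ d ∈ Ico 1 s, h ((n : ℤ) - 2 * (d : ℤ) * (c : ℤ)) := by
      refine Finset.sum_nbij' (fun m => (m - (s : ℤ)).toNat) (fun d => (s : ℤ) + (d : ℤ))
        ?_ ?_ ?_ ?_ ?_
      · intro a ha; simp only [mem_Icc, mem_Ico] at *; omega
      · intro a ha; simp only [mem_Icc, mem_Ico] at *; omega
      · intro a ha; simp only [mem_Icc] at ha; omega
      · intro a ha; simp only [mem_Ico] at ha; omega
      · intro a ha; simp only [mem_Icc] at ha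
        have hcast : (((a - (s : ℤ)).toNat : ℕ) : ℤ) = a - (s : ℤ) := by omega
        congr 1
        rw [hcast]; ring
    rw [hsplit, hfirst, hsecond, hthird]
    ring
  rw [hmain, hpeel, hdouble, hT]
  ring
end

section
/- Let $n \geq 1$ be odd, $c > n/2$ an integer, and $(h_k)$ a finitely supported sequence of naturals with $h_k = 0$ unless $0 \leq k \leq 2n$, $h_k = h_{2n-k}$, and $h_k = 0$ for all odd $k$. Define $b_* = \sum_{m\in\mathbb{N}} h_{*-2mc+n}$ and let $r = \sum_k h_k$. Then for every $s \in \mathbb{N}$ with $2sc > 2n$, $\sum_{m=2c-n}^{2sc} b_m = s r - r/2$. -/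
/-- Equation (sumb_m-odd): for odd `n`, `c > n/2`, lacunary Betti numbers `h` of the base,
the truncated Betti sum of the prequantization homology equals `s·r − r/2`. -/
theorem stmt_1 (n c s : ℕ) (hn : 1 ≤ n) (hnodd : Odd n) (hc : n < 2 * c)
    (h : ℤ → ℕ) (b : ℤ → ℕ)
    (hsupp : ∀ k : ℤ, (k < 0 ∨ (2 * (n : ℤ)) < k) → h k = 0)
    (hdual : ∀ k : ℤ, h k = h (2 * (n : ℤ) - k))
    (hlac : ∀ k : ℤ, Odd k → h k = 0)
    (hb : ∀ x : ℤ, b x = ∑' m : ℕ, h (x - 2 * ((m : ℤ) + 1) * (c : ℤ) + (n : ℤ)))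
    (hs : 2 * n < 2 * s * c) :
    ((∑ m ∈ Finset.Icc (2 * (c : ℤ) - (n : ℤ)) (2 * (s : ℤ) * (c : ℤ)), b m : ℕ) : ℚ) =
      (s : ℚ) * (∑ k ∈ Finset.Icc (0 : ℤ) (2 * (n : ℤ)), h k : ℕ) -
        ((∑ k ∈ Finset.Icc (0 : ℤ) (2 * (n : ℤ)), h k : ℕ) : ℚ) / 2 := by
  have hc0 : (0:ℤ) ≤ (c:ℤ) := Int.natCast_nonneg c
  have hn0 : (0:ℤ) ≤ (n:ℤ) := Int.natCast_nonneg n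
  have hCN : (n:ℤ) < 2*(c:ℤ) := by exact_mod_cast hc
  have hs1 : 1 ≤ s := by nlinarith
  set r : ℕ := ∑ k ∈ Finset.Icc (0:ℤ) (2*(n:ℤ)), h k with hrdef
  set T : ℕ := ∑ k ∈ Finset.Icc (0:ℤ) (n:ℤ), h k with hTdef
  -- full sums
  have hfull : ∀ a b : ℤ, a ≤ 0 → 2*(n:ℤ) ≤ b → ∑ k ∈ Finset.Icc a b, h k = r := by
    intro a b ha hb2
    rw [hrdef]
    symm
    apply Finset.sum_subset
    · intro k hk; simp only [Finset.mem_Icc] at *; omega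
    · intro k hk hk'
      simp only [Finset.mem_Icc] at hk hk'
      apply hsupp; omega
  have hhalf : ∀ a : ℤ, a ≤ 0 → ∑ k ∈ Finset.Icc a (n:ℤ), h k = T := by
    intro a ha
    rw [hTdef]
    symm
    apply Finset.sum_subset
    · intro k hk; simp only [Finset.mem_Icc] at *; omega
    · intro k hk hk'
      simp only [Finset.mem_Icc] at hk hk'
      apply hsupp; omega
  have hNodd : Odd ((n:ℤ)) := by
    obtain ⟨j, hj⟩ := hnodd
    exact ⟨(j:ℤ), by push_cast [hj]; ring⟩
  have hhn : h (n:ℤ) = 0 := hlac _ hNodd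
  -- 2T = r
  have h2T : 2 * T = r := by
    have hunion : Finset.Icc (0:ℤ) (n:ℤ) ∪ Finset.Icc (n:ℤ) (2*(n:ℤ)) =
        Finset.Icc (0:ℤ) (2*(n:ℤ)) := by
      ext x; simp only [Finset.mem_union, Finset.mem_Icc]; omega
    have hinter : Finset.Icc (0:ℤ) (n:ℤ) ∩ Finset.Icc (n:ℤ) (2*(n:ℤ)) = {(n:ℤ)} := by
      ext x; simp only [Finset.mem_inter, Finset.mem_Icc, Finset.mem_singleton]; omega
    have hsui := Finset.sum_union_inter (s₁ := Finset.Icc (0:ℤ) (n:ℤ))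
      (s₂ := Finset.Icc (n:ℤ) (2*(n:ℤ))) (f := h)
    rw [hunion, hinter, Finset.sum_singleton, hhn] at hsui
    -- reflection
    have himg : Finset.Icc (n:ℤ) (2*(n:ℤ)) =
        Finset.image (fun k => 2*(n:ℤ) - k) (Finset.Icc (0:ℤ) (n:ℤ)) := by
      ext x
      simp only [Finset.mem_image, Finset.mem_Icc]
      constructor
      · rintro ⟨h1, h2⟩; exact ⟨2*(n:ℤ) - x, ⟨by omega, by omega⟩, by ring⟩
      · rintro ⟨k, ⟨hk1, hk2⟩, rfl⟩; omega
    have hrefl : ∑ k ∈ Finset.Icc (n:ℤ) (2*(n:ℤ)), h k = T := by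
      rw [himg, Finset.sum_image (by intro x _ y _ hxy; simp only at hxy; omega)]
      rw [hTdef]
      exact Finset.sum_congr rfl fun k _ => (hdual k).symm
    omega
  -- shift lemma
  have hshift : ∀ (t A B : ℤ), ∑ x ∈ Finset.Icc A B, h (x - t + (n:ℤ)) =
      ∑ k ∈ Finset.Icc (A - t + (n:ℤ)) (B - t + (n:ℤ)), h k := by
    intro t A B
    rw [show Finset.Icc (A - t + (n:ℤ)) (B - t + (n:ℤ)) =
        Finset.image (fun x => x - t + (n:ℤ)) (Finset.Icc A B) by
      ext x
      simp only [Finset.mem_image, Finset.mem_Icc]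
      constructor
      · rintro ⟨h1, h2⟩; exact ⟨x + t - (n:ℤ), ⟨by omega, by omega⟩, by ring⟩
      · rintro ⟨k, ⟨hk1, hk2⟩, rfl⟩; omega]
    rw [Finset.sum_image (by intro x _ y _ hxy; simp only at hxy; omega)]
  -- b on the window is a finite sum
  have hbx : ∀ x ∈ Finset.Icc (2*(c:ℤ) - (n:ℤ)) (2*(s:ℤ)*(c:ℤ)),
      b x = ∑ m ∈ Finset.range s, h (x - 2 * ((m : ℤ) + 1) * (c : ℤ) + (n : ℤ)) := by
    intro x hx
    simp only [Finset.mem_Icc] at hx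
    rw [hb x]
    apply tsum_eq_sum
    intro m hm
    simp only [Finset.mem_range, not_lt] at hm
    apply hsupp
    left
    have hm' : (s:ℤ) + 1 ≤ (m:ℤ) + 1 := by exact_mod_cast Nat.succ_le_succ hm
    nlinarith [mul_le_mul_of_nonneg_right hm' hc0, hx.2]
  obtain ⟨t, rfl⟩ : ∃ t, s = t + 1 := ⟨s - 1, by omega⟩
  have hkey : ∑ m ∈ Finset.Icc (2*(c:ℤ) - (n:ℤ)) (2*(↑(t+1):ℤ)*(c:ℤ)), b m = t * r + T := by
    rw [Finset.sum_congr rfl hbx, Finset.sum_comm, Finset.sum_range_succ]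
    have hlast : ∑ x ∈ Finset.Icc (2*(c:ℤ) - (n:ℤ)) (2*(↑(t+1):ℤ)*(c:ℤ)),
        h (x - 2 * ((t : ℤ) + 1) * (c : ℤ) + (n : ℤ)) = T := by
      rw [hshift]
      have e1 : (2*(↑(t+1):ℤ)*(c:ℤ)) - 2 * ((t : ℤ) + 1) * (c : ℤ) + (n:ℤ) = (n:ℤ) := by
        push_cast; ring
      rw [e1]
      apply hhalf
      have : (0:ℤ) ≤ (t:ℤ) := Int.natCast_nonneg t
      nlinarith
    rw [hlast]
    have hmain : ∀ m ∈ Finset.range t, ∑ x ∈ Finset.Icc (2*(c:ℤ) - (n:ℤ)) (2*(↑(t+1):ℤ)*(c:ℤ)),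
        h (x - 2 * ((m : ℤ) + 1) * (c : ℤ) + (n : ℤ)) = r := by
      intro m hm
      simp only [Finset.mem_range] at hm
      rw [hshift]
      apply hfull
      · have hm0 : (0:ℤ) ≤ (m:ℤ) := Int.natCast_nonneg m
        nlinarith
      · have hm2 : (m:ℤ) + 2 ≤ (t:ℤ) + 1 := by exact_mod_cast Nat.succ_le_succ (Nat.succ_le_of_lt hm)
        have := mul_le_mul_of_nonneg_right hm2 hc0
        push_cast
        nlinarith
    rw [Finset.sum_congr rfl hmain, Finset.sum_const, Finset.card_range, smul_eq_mul]
  rw [hkey]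
  have h2T' : (T:ℚ) * 2 = (r:ℚ) := by
    have : ((2*T:ℕ):ℚ) = ((r:ℕ):ℚ) := by exact_mod_cast congrArg (Nat.cast (R:=ℚ)) h2T
    push_cast at this; linarith
  push_cast
  field_simp
  ring_nf
  nlinarith [h2T']
end

section
/- Let $n \geq 2$ be even, $c > n/2$ an integer, and $(h_k)$ a finitely supported sequence of naturals with $h_k = 0$ unless $0 \leq k \leq 2n$, $h_k = h_{2n-k}$, and $h_k = 0$ for odd $k$. Define $b_* = \sum_{m\in\mathbb{N}} h_{*-2mc+n}$ and $r = \sum_k h_k$. Then for every $s \in \mathbb{N}$ with $2sc > 2n$, $\sum_{m=2c-n}^{2sc+1} b_m = s r - (r - h_n)/2$. -/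
/-- Equation (sumb_m-even): for even `n`, `c > n/2`, lacunary Betti numbers `h` of the base,
the truncated Betti sum (up to degree `2sc+1`) equals `s·r − (r − h n)/2`. -/
theorem stmt_2 (n c s : ℕ) (hn : 2 ≤ n) (hneven : Even n) (hc : n < 2 * c)
    (h : ℤ → ℕ) (b : ℤ → ℕ)
    (hsupp : ∀ k : ℤ, (k < 0 ∨ (2 * (n : ℤ)) < k) → h k = 0)
    (hdual : ∀ k : ℤ, h k = h (2 * (n : ℤ) - k))
    (hlac : ∀ k : ℤ, Odd k → h k = 0)
    (hb : ∀ x : ℤ, b x = ∑' m : ℕ, h (x - 2 * ((m : ℤ) + 1) * (c : ℤ) + (n : ℤ)))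
    (hs : 2 * n < 2 * s * c) :
    ((∑ m ∈ Finset.Icc (2 * (c : ℤ) - (n : ℤ)) (2 * (s : ℤ) * (c : ℤ) + 1), b m : ℕ) : ℚ) =
      (s : ℚ) * (∑ k ∈ Finset.Icc (0 : ℤ) (2 * (n : ℤ)), h k : ℕ) -
        (((∑ k ∈ Finset.Icc (0 : ℤ) (2 * (n : ℤ)), h k : ℕ) : ℚ) - (h n : ℚ)) / 2 := by
  -- basic facts
  have hs1 : 1 ≤ s := by
    by_contra hs0
    push_neg at hs0
    interval_cases s <;> omega
  obtain ⟨t, rfl⟩ : ∃ t, s = t + 1 := ⟨s - 1, by omega⟩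
  have hc2 : (n : ℤ) + 2 ≤ 2 * c := by
    obtain ⟨a, rfl⟩ := hneven
    have : a < c := by omega
    push_cast; omega
  set r := ∑ k ∈ Finset.Icc (0 : ℤ) (2 * (n : ℤ)), h k with hr
  set T := ∑ k ∈ Finset.Icc (0 : ℤ) (n : ℤ), h k with hT
  -- duality: 2T = r + h n
  have key2 : 2 * T = r + h n := by
    have hunion : Finset.Icc (0 : ℤ) (2 * (n : ℤ))
        = Finset.Icc (0 : ℤ) (n : ℤ) ∪ Finset.Ioc (n : ℤ) (2 * (n : ℤ)) := by
      ext x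
      simp only [Finset.mem_Icc, Finset.mem_union, Finset.mem_Ioc]
      omega
    have hsplit : r = T + ∑ k ∈ Finset.Ioc (n : ℤ) (2 * (n : ℤ)), h k := by
      rw [hr, hT, ← Finset.sum_union (by
        rw [Finset.disjoint_left]
        intro x hx hx'
        simp only [Finset.mem_Icc, Finset.mem_Ioc] at hx hx'
        omega), ← hunion]
    have hrefl : ∑ k ∈ Finset.Ioc (n : ℤ) (2 * (n : ℤ)), h k
        = ∑ k ∈ Finset.Ico (0 : ℤ) (n : ℤ), h k := by
      apply Finset.sum_nbij' (fun k => 2 * (n : ℤ) - k) (fun k => 2 * (n : ℤ) - k)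
      · intro a ha; simp only [Finset.mem_Ioc, Finset.mem_Ico] at *; omega
      · intro a ha; simp only [Finset.mem_Ioc, Finset.mem_Ico] at *; omega
      · intro a _; ring
      · intro a _; ring
      · intro a _; exact hdual a
    have hlast : T = (∑ k ∈ Finset.Ico (0 : ℤ) (n : ℤ), h k) + h n := by
      rw [hT, Finset.Icc_eq_cons_Ico (by positivity), Finset.sum_cons]
      omega
    omega
  -- b m as a finite sum on the relevant range
  set A : ℤ := 2 * (c : ℤ) - (n : ℤ) with hA
  set B : ℤ := 2 * ((t : ℤ) + 1) * (c : ℤ) + 1 with hB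
  have hBcast : 2 * ((t + 1 : ℕ) : ℤ) * (c : ℤ) + 1 = B := by push_cast [hB]; ring
  have hbfin : ∀ m ∈ Finset.Icc A B, b m
      = ∑ j ∈ Finset.range (t + 1), h (m - 2 * ((j : ℤ) + 1) * (c : ℤ) + (n : ℤ)) := by
    intro m hm
    rw [hb]
    apply tsum_eq_sum
    intro j hj
    simp only [Finset.mem_range, not_lt] at hj
    simp only [Finset.mem_Icc, hA, hB] at hm
    apply hsupp; left
    have hj' : ((t : ℤ) + 2) ≤ (j : ℤ) + 1 := by exact_mod_cast by omega
    have hcpos : (0 : ℤ) ≤ (c : ℤ) := by positivity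
    nlinarith [hm.2, hc2]
  -- generic shift lemma
  have hshift : ∀ d : ℤ, ∑ m ∈ Finset.Icc A B, h (m - d)
      = ∑ k ∈ Finset.Icc (A - d) (B - d), h k := by
    intro d
    have : Finset.Icc A B = Finset.map (addRightEmbedding d) (Finset.Icc (A - d) (B - d)) := by
      rw [Finset.map_add_right_Icc]; congr 1 <;> ring
    rw [this, Finset.sum_map]
    apply Finset.sum_congr rfl
    intro k _
    simp [addRightEmbedding]
  -- full-window lemma
  have hfull : ∀ A' B' : ℤ, A' ≤ 0 → 2 * (n : ℤ) ≤ B' →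
      ∑ k ∈ Finset.Icc A' B', h k = r := by
    intro A' B' hA' hB'
    rw [hr]; symm
    apply Finset.sum_subset
    · intro x hx; simp only [Finset.mem_Icc] at *; omega
    · intro x hx hx'
      simp only [Finset.mem_Icc, not_and_or, not_le] at hx hx'
      exact hsupp x (by omega)
  -- half-window lemma
  have hhalf : ∀ A' : ℤ, A' ≤ 0 → ∑ k ∈ Finset.Icc A' ((n : ℤ) + 1), h k = T := by
    intro A' hA'
    have h1 : ∑ k ∈ Finset.Icc A' ((n : ℤ) + 1), h k
        = ∑ k ∈ Finset.Icc (0 : ℤ) ((n : ℤ) + 1), h k := by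
      symm; apply Finset.sum_subset
      · intro x hx; simp only [Finset.mem_Icc] at *; omega
      · intro x hx hx'
        simp only [Finset.mem_Icc, not_and_or, not_le] at hx hx'
        exact hsupp x (by omega)
    have h2 : h ((n : ℤ) + 1) = 0 := by
      apply hlac
      obtain ⟨a, rfl⟩ := hneven
      exact ⟨a, by push_cast; ring⟩
    have h3 : Finset.Ico (0 : ℤ) ((n : ℤ) + 1) = Finset.Icc (0 : ℤ) (n : ℤ) := by
      ext x
      simp only [Finset.mem_Icc, Finset.mem_Ico]
      omega
    rw [h1, Finset.Icc_eq_cons_Ico (by positivity), Finset.sum_cons, h2, zero_add, h3, hT]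
  -- main computation
  have hmain : ∑ m ∈ Finset.Icc A B, b m = t * r + T := by
    rw [Finset.sum_congr rfl hbfin, Finset.sum_comm]
    have hterm : ∀ j : ℕ, ∑ m ∈ Finset.Icc A B,
        h (m - 2 * ((j : ℤ) + 1) * (c : ℤ) + (n : ℤ))
        = ∑ k ∈ Finset.Icc (A - (2 * ((j : ℤ) + 1) * (c : ℤ) - (n : ℤ)))
            (B - (2 * ((j : ℤ) + 1) * (c : ℤ) - (n : ℤ))), h k := by
      intro j
      rw [← hshift (2 * ((j : ℤ) + 1) * (c : ℤ) - (n : ℤ))]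
      apply Finset.sum_congr rfl
      intro m _; congr 1; ring
    rw [Finset.sum_congr rfl fun j _ => hterm j, Finset.sum_range_succ]
    have hlastj : Finset.Icc (A - (2 * ((t : ℤ) + 1) * (c : ℤ) - (n : ℤ)))
        (B - (2 * ((t : ℤ) + 1) * (c : ℤ) - (n : ℤ)))
        = Finset.Icc (A - (2 * ((t : ℤ) + 1) * (c : ℤ) - (n : ℤ))) ((n : ℤ) + 1) := by
      congr 1; rw [hB]; ring
    rw [hlastj, hhalf _ (by rw [hA]; nlinarith [hc2, (by positivity : (0:ℤ) ≤ (t:ℤ)), (by positivity : (0:ℤ) ≤ (c:ℤ))])]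
    have hrs : ∀ j ∈ Finset.range t,
        ∑ k ∈ Finset.Icc (A - (2 * ((j : ℤ) + 1) * (c : ℤ) - (n : ℤ)))
          (B - (2 * ((j : ℤ) + 1) * (c : ℤ) - (n : ℤ))), h k = r := by
      intro j hj
      simp only [Finset.mem_range] at hj
      have hj' : (j : ℤ) + 1 ≤ (t : ℤ) := by exact_mod_cast by omega
      have hcpos : (0 : ℤ) ≤ (c : ℤ) := by positivity
      have hjpos : (0 : ℤ) ≤ (j : ℤ) := by positivity
      apply hfull
      · rw [hA]; nlinarith
      · rw [hB]; nlinarith [hc2]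
    rw [Finset.sum_congr rfl hrs, Finset.sum_const, Finset.card_range, smul_eq_mul]
  rw [show (2 * (((t + 1 : ℕ) : ℤ)) * (c : ℤ) + 1) = B from hBcast, hA, hmain]
  have key2' : 2 * (T : ℚ) = (r : ℚ) + (h n : ℚ) := by exact_mod_cast congrArg (Nat.cast : ℕ → ℚ) key2
  push_cast
  linarith
end

section
/- Suppose $\hat\mu_1, \dots, \hat\mu_r$ are positive reals and for each $i$ there is an integer sequence $(\mu_{i,j})_{j\geq 1}$ with $|j\hat\mu_i - \mu_{i,j}| < n$ for all $j$. Then for every $\epsilon > 0$ there exist infinitely many pairwise disjoint closed intervals $I \subset \mathbb{R}$ of length $2n + \epsilon$ such that for each such $I$ there exist positive integers $k_1, \dots, k_r$ with $\mu_{i,k_i} \in I$ for all $i = 1, \dots, r$. -/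
open Finset

/-- Simultaneous Dirichlet-type approximation via pigeonhole. -/
lemma simultaneous_approx {r : ℕ} (β : Fin r → ℝ) {δ : ℝ} (hδ : 0 < δ) :
    ∃ q : ℕ, 1 ≤ q ∧ ∀ i, ∃ p : ℤ, |(q : ℝ) * β i - p| < δ := by
  set K : ℕ := ⌈1/δ⌉₊ + 1 with hKdef
  have hK1 : 1 ≤ K := Nat.le_add_left 1 _
  have hK0 : (0:ℝ) < K := by positivity
  have hKδ : 1 / (K:ℝ) < δ := by
    rw [div_lt_iff₀ hK0]
    have h1 : 1/δ < (K:ℝ) := by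
      have := Nat.le_ceil (1/δ)
      push_cast [hKdef]
      linarith
    calc (1:ℝ) = δ * (1/δ) := by field_simp
    _ < δ * K := by apply mul_lt_mul_of_pos_left h1 hδ
  -- box map
  have hbox : ∀ (q : ℕ) (i : Fin r), (⌊Int.fract ((q:ℝ) * β i) * K⌋).toNat < K := by
    intro q i
    have h0 : (0:ℝ) ≤ Int.fract ((q:ℝ) * β i) := Int.fract_nonneg _
    have h1 : Int.fract ((q:ℝ) * β i) < 1 := Int.fract_lt_one _
    have : Int.fract ((q:ℝ) * β i) * K < K := by nlinarith
    have hfl : ⌊Int.fract ((q:ℝ) * β i) * K⌋ < (K:ℤ) := by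
      apply Int.floor_lt.mpr; exact_mod_cast this
    omega
  set f : Fin (K ^ r + 1) → (Fin r → Fin K) :=
    fun q i => ⟨(⌊Int.fract ((q.1:ℝ) * β i) * K⌋).toNat, hbox q.1 i⟩ with hfdef
  have hcard : Fintype.card (Fin r → Fin K) < Fintype.card (Fin (K ^ r + 1)) := by
    simp
  obtain ⟨q1, q2, hne, hfq⟩ := Fintype.exists_ne_map_eq_of_card_lt f hcard
  have key : ∀ a b : Fin (K ^ r + 1), a < b → f a = f b →
      ∃ q : ℕ, 1 ≤ q ∧ ∀ i, ∃ p : ℤ, |(q : ℝ) * β i - p| < δ := by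
    intro a b hab hfab
    refine ⟨b.1 - a.1, by omega, fun i => ?_⟩
    refine ⟨⌊(b.1:ℝ) * β i⌋ - ⌊(a.1:ℝ) * β i⌋, ?_⟩
    have hfloor : ⌊Int.fract ((a.1:ℝ) * β i) * K⌋ = ⌊Int.fract ((b.1:ℝ) * β i) * K⌋ := by
      have := congrFun hfab i
      have h0a : 0 ≤ ⌊Int.fract ((a.1:ℝ) * β i) * K⌋ :=
        Int.floor_nonneg.mpr (mul_nonneg (Int.fract_nonneg _) hK0.le)
      have h0b : 0 ≤ ⌊Int.fract ((b.1:ℝ) * β i) * K⌋ :=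
        Int.floor_nonneg.mpr (mul_nonneg (Int.fract_nonneg _) hK0.le)
      have hv := congrArg Fin.val this
      simp only [hfdef] at hv
      omega
    have habs : |Int.fract ((b.1:ℝ) * β i) * K - Int.fract ((a.1:ℝ) * β i) * K| < 1 :=
      Int.abs_sub_lt_one_of_floor_eq_floor hfloor.symm
    have hcast : (((b.1 - a.1 : ℕ)) : ℝ) = (b.1:ℝ) - (a.1:ℝ) := by
      have : a.1 ≤ b.1 := le_of_lt hab
      push_cast [Nat.cast_sub this]; ring
    rw [hcast]
    have hEq : ((b.1:ℝ) - (a.1:ℝ)) * β i - (↑(⌊(b.1:ℝ) * β i⌋ - ⌊(a.1:ℝ) * β i⌋)) =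
        Int.fract ((b.1:ℝ) * β i) - Int.fract ((a.1:ℝ) * β i) := by
      rw [Int.fract, Int.fract]; push_cast; ring
    rw [hEq]
    have : |Int.fract ((b.1:ℝ) * β i) - Int.fract ((a.1:ℝ) * β i)| * K < 1 := by
      calc |Int.fract ((b.1:ℝ) * β i) - Int.fract ((a.1:ℝ) * β i)| * K
          = |Int.fract ((b.1:ℝ) * β i) * K - Int.fract ((a.1:ℝ) * β i) * K| := by
            rw [← sub_mul, abs_mul, abs_of_pos hK0]
        _ < 1 := habs
    calc |Int.fract ((b.1:ℝ) * β i) - Int.fract ((a.1:ℝ) * β i)|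
        < 1 / K := by rw [lt_div_iff₀ hK0]; exact this
      _ < δ := hKδ
  rcases hne.lt_or_gt with hlt | hlt
  · exact key q1 q2 hlt hfq
  · exact key q2 q1 hlt hfq.symm

/-- Existence of a "good" value beyond any bound: a real `T ≥ B` approximated
within `ε/2` simultaneously by multiples `k i * μhat i` with `k i ≥ 1`. -/
lemma exists_good {r : ℕ} (μhat : Fin r → ℝ) (hpos : ∀ i, 0 < μhat i)
    {ε : ℝ} (hε : 0 < ε) (B : ℝ) :
    ∃ T : ℝ, B ≤ T ∧ ∃ k : Fin r → ℕ, (∀ i, 1 ≤ k i) ∧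
      ∀ i, |(k i : ℝ) * μhat i - T| ≤ ε / 2 := by
  set S : ℝ := ∑ i, μhat i with hSdef
  have hS : 0 ≤ S := Finset.sum_nonneg fun i _ => (hpos i).le
  have hμS : ∀ i, μhat i ≤ 1 + S := by
    intro i
    have : μhat i ≤ S := Finset.single_le_sum (fun j _ => (hpos j).le) (mem_univ i)
    linarith
  set δ : ℝ := ε / (2 * (1 + S)) with hδdef
  have hδ : 0 < δ := by positivity
  set N : ℕ := max ⌈B⌉₊ ⌈(1 + δ) * (1 + S)⌉₊ + 1 with hNdef
  have hNB : B ≤ (N : ℝ) := by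
    calc B ≤ (⌈B⌉₊ : ℝ) := Nat.le_ceil B
    _ ≤ N := by exact_mod_cast Nat.le_of_lt (by omega)
  have hNμ : ∀ i, (1 + δ) * μhat i ≤ (N : ℝ) := by
    intro i
    calc (1 + δ) * μhat i ≤ (1 + δ) * (1 + S) := by
          apply mul_le_mul_of_nonneg_left (hμS i) (by linarith)
      _ ≤ (⌈(1 + δ) * (1 + S)⌉₊ : ℝ) := Nat.le_ceil _
      _ ≤ N := by exact_mod_cast Nat.le_of_lt (by omega)
  obtain ⟨q, hq1, hq⟩ := simultaneous_approx (fun i => (N : ℝ) / μhat i) hδ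
  choose p hp using hq
  have hq1' : (1:ℝ) ≤ q := by exact_mod_cast hq1
  have hppos : ∀ i, 1 ≤ p i := by
    intro i
    have hi := hp i
    have hμ := hpos i
    have h1 : (N:ℝ) / μhat i ≥ 1 + δ := by
      rw [ge_iff_le, le_div_iff₀ hμ]
      linarith [hNμ i]
    have h2 : (q:ℝ) * ((N:ℝ) / μhat i) ≥ 1 + δ := by
      calc (q:ℝ) * ((N:ℝ) / μhat i) ≥ 1 * ((N:ℝ) / μhat i) := by
            apply mul_le_mul_of_nonneg_right hq1' (by positivity)
        _ = (N:ℝ) / μhat i := one_mul _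
        _ ≥ 1 + δ := h1
    have := abs_lt.mp hi
    have h1p : (1:ℝ) < p i := by linarith [this.1]
    have : (1:ℤ) < p i := by exact_mod_cast h1p
    omega
  refine ⟨(N:ℝ) * q, ?_, fun i => (p i).toNat, ?_, ?_⟩
  · calc B ≤ (N:ℝ) := hNB
    _ = (N:ℝ) * 1 := (mul_one _).symm
    _ ≤ (N:ℝ) * q := by
        apply mul_le_mul_of_nonneg_left hq1' (by positivity)
  · intro i
    have := hppos i
    show 1 ≤ (p i).toNat
    omega
  · intro i
    have hμ := hpos i
    have hcast : ((p i).toNat : ℝ) = ((p i : ℤ) : ℝ) := by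
      have := hppos i
      norm_cast
      omega
    rw [hcast]
    have hi := hp i
    have hEq : ((p i : ℤ) : ℝ) * μhat i - (N:ℝ) * q =
        -(((q:ℝ) * ((N:ℝ) / μhat i) - (p i : ℤ)) * μhat i) := by
      field_simp
      ring
    rw [hEq, abs_neg, abs_mul, abs_of_pos hμ]
    have hbound : |(q:ℝ) * ((N:ℝ) / μhat i) - (p i : ℤ)| * μhat i ≤ δ * μhat i := by
      apply mul_le_mul_of_nonneg_right hi.le hμ.le
    calc |(q:ℝ) * ((N:ℝ) / μhat i) - (p i : ℤ)| * μhat i ≤ δ * μhat i := hbound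
      _ ≤ δ * (1 + S) := by
          apply mul_le_mul_of_nonneg_left (hμS i) hδ.le
      _ = ε / 2 := by rw [hδdef]; field_simp

/-- Gürel's combinatorial lemma (Lemma 5.2): given `r` sequences of indices satisfying the
index–mean-index inequality with positive mean indices, for every `ε > 0` there are infinitely
many pairwise disjoint closed intervals of length `2n + ε` each containing simultaneous
iterated indices `μ_{i, k_i}` for all `i`. -/
theorem stmt_5 (n r : ℕ) (μhat : Fin r → ℝ) (hpos : ∀ i, 0 < μhat i)
    (μ : Fin r → ℕ → ℤ)
    (h : ∀ i, ∀ j : ℕ, 1 ≤ j → |(j : ℝ) * μhat i - (μ i j : ℝ)| < n)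
    (ε : ℝ) (hε : 0 < ε) :
    ∃ I : ℕ → Set ℝ,
      (∀ m : ℕ, ∃ a : ℝ, I m = Set.Icc a (a + (2 * n + ε))) ∧
      (Pairwise fun m m' => Disjoint (I m) (I m')) ∧
      (∀ m : ℕ, ∃ k : Fin r → ℕ, (∀ i, 1 ≤ k i) ∧ ∀ i, ((μ i (k i) : ℝ)) ∈ I m) := by
  have hC := exists_good μhat hpos hε
  choose F hF1 hF2 using hC
  set c : ℕ → ℝ := fun m => Nat.rec (F 0) (fun _ prev => F (prev + (2 * n + ε + 1))) m
    with hcdef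
  have hstep : ∀ m : ℕ, c m + (2 * n + ε + 1) ≤ c (m + 1) := by
    intro m
    exact hF1 (c m + (2 * n + ε + 1))
  have hgood : ∀ m : ℕ, ∃ k : Fin r → ℕ, (∀ i, 1 ≤ k i) ∧
      ∀ i, |(k i : ℝ) * μhat i - c m| ≤ ε / 2 := by
    intro m
    cases m with
    | zero => exact hF2 0
    | succ m => exact hF2 (c m + (2 * n + ε + 1))
  have hmono : ∀ m m' : ℕ, m < m' → c m + (2 * n + ε + 1) ≤ c m' := by
    intro m m' hmm
    induction m' with
    | zero => omega
    | succ m'' ih =>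
      rcases Nat.lt_or_ge m m'' with h' | h'
      · have := hstep m''
        have := ih h'
        have h2 : c m'' ≤ c (m'' + 1) := by linarith [hstep m'', hε]
        linarith
      · have : m = m'' := by omega
        subst this
        exact hstep m
  refine ⟨fun m => Set.Icc (c m - ((n:ℝ) + ε / 2)) (c m - ((n:ℝ) + ε / 2) + (2 * n + ε)),
    fun m => ⟨c m - ((n:ℝ) + ε / 2), rfl⟩, ?_, ?_⟩
  · -- pairwise disjoint
    have key : ∀ m m' : ℕ, m < m' →
        Disjoint (Set.Icc (c m - ((n:ℝ) + ε / 2)) (c m - ((n:ℝ) + ε / 2) + (2 * n + ε)))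
          (Set.Icc (c m' - ((n:ℝ) + ε / 2)) (c m' - ((n:ℝ) + ε / 2) + (2 * n + ε))) := by
      intro m m' hmm
      rw [Set.disjoint_left]
      rintro x ⟨hx1, hx2⟩ ⟨hy1, hy2⟩
      have := hmono m m' hmm
      have : c m - ((n:ℝ) + ε / 2) + (2 * n + ε) < c m' - ((n:ℝ) + ε / 2) := by
        push_cast
        linarith
      linarith
    intro m m' hne
    rcases hne.lt_or_gt with hlt | hlt
    · exact key m m' hlt
    · exact (key m' m hlt).symm
  · intro m
    obtain ⟨k, hk1, hk2⟩ := hgood m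
    refine ⟨k, hk1, fun i => ?_⟩
    have h1 := h i (k i) (hk1 i)
    have h2 := hk2 i
    have h3 := abs_lt.mp h1
    have h4 := abs_le.mp h2
    constructor
    · push_cast
      push_cast at h3 h4
      linarith
    · push_cast
      push_cast at h3 h4
      linarith
end

section
/- Let $(\mu_j)_{j \geq 1}$ be a sequence of integers, $d \in \mathbb{Z}$, $k, \ell_0 \in \mathbb{N}$ with $\ell_0 + 2 \leq k$. Assume: (a) $\mu_{k+\ell} = d + \mu_\ell$ and $\mu_{k-\ell} = d - \mu_\ell$ for all $1 \leq \ell \leq \ell_0$; (b) $\mu_j \geq 1$ for all $j$; (c) $\mu_{m+\ell} \geq \mu_m$ whenever $\ell \geq \ell_0$ and $m \geq 1$. Then $\mu_{k-\ell} \leq d - 1$ for all $1 \leq \ell < k$, and $\mu_{k+\ell} \geq d + 1$ for all $\ell \geq 1$. -/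
/-- Derivation of the bounds (eq:bound1)–(eq:bound2): from the index recurrence identities,
positivity of indices, and eventual monotonicity under iteration, all indices `μ_{k±ℓ}` are
bounded away from `d`. -/
theorem stmt_7 (μ : ℕ → ℤ) (d : ℤ) (k ℓ₀ : ℕ) (hℓ₀ : 1 ≤ ℓ₀) (hk : ℓ₀ + 2 ≤ k)
    (ha : ∀ ℓ : ℕ, 1 ≤ ℓ → ℓ ≤ ℓ₀ → μ (k + ℓ) = d + μ ℓ ∧ μ (k - ℓ) = d - μ ℓ)
    (hb : ∀ j : ℕ, 1 ≤ j → 1 ≤ μ j)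
    (hc : ∀ m ℓ : ℕ, 1 ≤ m → ℓ₀ ≤ ℓ → μ m ≤ μ (m + ℓ)) :
    (∀ ℓ : ℕ, 1 ≤ ℓ → ℓ < k → μ (k - ℓ) ≤ d - 1) ∧
    (∀ ℓ : ℕ, 1 ≤ ℓ → d + 1 ≤ μ (k + ℓ)) := by
  constructor
  · intro ℓ h1 hℓk
    by_cases hle : ℓ ≤ ℓ₀
    · have h := (ha ℓ h1 hle).2
      have := hb ℓ h1
      omega
    · push_neg at hle
      set ℓ' := min (ℓ - ℓ₀) ℓ₀ with hℓ'def
      have h1' : 1 ≤ ℓ' := by omega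
      have h2' : ℓ' ≤ ℓ₀ := min_le_right _ _
      have hgap : ℓ₀ ≤ ℓ - ℓ' := by omega
      have hm : 1 ≤ k - ℓ := by omega
      have key := hc (k - ℓ) (ℓ - ℓ') hm hgap
      have heq : (k - ℓ) + (ℓ - ℓ') = k - ℓ' := by omega
      rw [heq] at key
      have h := (ha ℓ' h1' h2').2
      have := hb ℓ' h1'
      omega
  · intro ℓ h1
    by_cases hle : ℓ ≤ ℓ₀
    · have h := (ha ℓ h1 hle).1
      have := hb ℓ h1
      omega
    · push_neg at hle
      set ℓ' := min (ℓ - ℓ₀) ℓ₀ with hℓ'def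
      have h1' : 1 ≤ ℓ' := by omega
      have h2' : ℓ' ≤ ℓ₀ := min_le_right _ _
      have hgap : ℓ₀ ≤ ℓ - ℓ' := by omega
      have hm : 1 ≤ k + ℓ' := by omega
      have key := hc (k + ℓ') (ℓ - ℓ') hm hgap
      have heq : (k + ℓ') + (ℓ - ℓ') = k + ℓ := by omega
      rw [heq] at key
      have h := (ha ℓ' h1' h2').1
      have := hb ℓ' h1'
      omega
end

section
/- Let $(\mu_j)_{j\geq 1}$ be integers, $d = 2sc$ for integers $s,c \geq 1$, and $k > \ell_0 \geq 1$ integers with: (a) $\mu_{k+\ell} = d + \mu_\ell$ and $\mu_{k-\ell} = d - \mu_\ell$ for $1 \leq \ell \leq \ell_0$; (b) $\mu_{m+\ell} \geq \mu_m + n + 3$ for all $m \geq 1$, $\ell \geq \ell_0$; (c) $|\hat\mu j - \mu_j| < n$ for all $j$ for some real $\hat\mu$ with $|\hat\mu k - d| < 1$; (d) $\mu_j$ is odd for all $j$ (parity $n$ odd). Then the number of $j \in \mathbb{N}$, $j \neq k$, with $\mu_j \leq d$ equals $k - 1$. -/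
/-- Identity (eq:k_i) of Appendix A: with the index recurrence, the strengthened growth
property, the index–mean-index inequality, and odd parity of all indices,
the number of iterates `j ≠ k` with `μ_j ≤ d` is exactly `k − 1`. -/
theorem stmt_9 (n s c : ℕ) (hs : 1 ≤ s) (hc : 1 ≤ c)
    (μ : ℕ → ℤ) (μhat : ℝ) (d : ℤ) (k ℓ₀ : ℕ) (hℓ₀ : 1 ≤ ℓ₀) (hk : ℓ₀ < k)
    (hd : d = 2 * (s : ℤ) * (c : ℤ))
    (ha : ∀ ℓ : ℕ, 1 ≤ ℓ → ℓ ≤ ℓ₀ → μ (k + ℓ) = d + μ ℓ ∧ μ (k - ℓ) = d - μ ℓ)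
    (hgrow : ∀ m ℓ : ℕ, 1 ≤ m → ℓ₀ ≤ ℓ → μ m + (n : ℤ) + 3 ≤ μ (m + ℓ))
    (hmean : ∀ j : ℕ, 1 ≤ j → |μhat * (j : ℝ) - (μ j : ℝ)| < n)
    (hmeank : |μhat * (k : ℝ) - (d : ℝ)| < 1)
    (hodd : ∀ j : ℕ, 1 ≤ j → Odd (μ j)) :
    {j : ℕ | 1 ≤ j ∧ j ≠ k ∧ μ j ≤ d}.Finite ∧
      {j : ℕ | 1 ≤ j ∧ j ≠ k ∧ μ j ≤ d}.ncard = k - 1 := by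
  have hk1 : 1 ≤ k := by omega
  -- μ k is within n+1 of d
  have hbk := abs_lt.mp (hmean k hk1)
  have hbk' := abs_lt.mp hmeank
  have lb : d - (n : ℤ) - 1 < μ k := by
    have : (d : ℝ) - (n : ℝ) - 1 < (μ k : ℝ) := by linarith
    exact_mod_cast this
  have ub : μ k < d + (n : ℤ) + 1 := by
    have : (μ k : ℝ) < (d : ℝ) + (n : ℝ) + 1 := by linarith
    exact_mod_cast this
  -- for j ≥ k + ℓ₀ : μ j > d
  have big : ∀ j : ℕ, k + ℓ₀ ≤ j → d < μ j := by
    intro j hj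
    have h := hgrow k (j - k) hk1 (by omega)
    rw [show k + (j - k) = j from by omega] at h
    linarith
  -- for j with j + ℓ₀ < k : μ j < d
  have small : ∀ j : ℕ, 1 ≤ j → j + ℓ₀ < k → μ j < d := by
    intro j h1 h2
    have h := hgrow j (k - j) h1 (by omega)
    rw [show j + (k - j) = k from by omega] at h
    linarith
  -- odd values are nonzero
  have hne : ∀ ℓ : ℕ, 1 ≤ ℓ → μ ℓ ≠ 0 := by
    intro ℓ h1 h0
    rcases hodd ℓ h1 with ⟨t, ht⟩
    omega
  set f : ℕ → ℕ := fun j => if j + ℓ₀ < k ∨ 0 < μ (k - j) then j else 2 * k - j with hf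
  have hinj : Set.InjOn f (Set.Icc 1 (k - 1)) := by
    intro a ha' b hb' hab
    simp only [Set.mem_Icc] at ha' hb'
    simp only [hf] at hab
    split_ifs at hab <;> omega
  have himg : f '' (Set.Icc 1 (k - 1)) = {j : ℕ | 1 ≤ j ∧ j ≠ k ∧ μ j ≤ d} := by
    ext j
    simp only [Set.mem_image, Set.mem_Icc, Set.mem_setOf_eq]
    constructor
    · rintro ⟨i, ⟨hi1, hi2⟩, rfl⟩
      simp only [hf]
      split_ifs with h
      · refine ⟨hi1, by omega, ?_⟩
        rcases h with h | h
        · exact le_of_lt (small i hi1 h)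
        · -- k - i ∈ [1, ℓ₀] would be needed; if i + ℓ₀ < k use small, else pairing
          by_cases h' : i + ℓ₀ < k
          · exact le_of_lt (small i hi1 h')
          · have hℓ : 1 ≤ k - i ∧ k - i ≤ ℓ₀ := by omega
            have hp := (ha (k - i) hℓ.1 hℓ.2).2
            rw [show k - (k - i) = i from by omega] at hp
            omega
      · push_neg at h
        refine ⟨by omega, by omega, ?_⟩
        have hℓ : 1 ≤ k - i ∧ k - i ≤ ℓ₀ := by omega
        have hp := (ha (k - i) hℓ.1 hℓ.2).1
        rw [show k + (k - i) = 2 * k - i from by omega] at hp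
        have := h.2
        omega
    · rintro ⟨h1, h2, h3⟩
      rcases lt_or_gt_of_ne h2 with hlt | hgt
      · refine ⟨j, ⟨h1, by omega⟩, ?_⟩
        simp only [hf]
        rw [if_pos]
        by_cases h' : j + ℓ₀ < k
        · exact Or.inl h'
        · right
          have hℓ : 1 ≤ k - j ∧ k - j ≤ ℓ₀ := by omega
          have hp := (ha (k - j) hℓ.1 hℓ.2).2
          rw [show k - (k - j) = j from by omega] at hp
          have hne' := hne (k - j) hℓ.1
          omega
      ·
        have hjlt : j < k + ℓ₀ := by
          by_contra hcon
          exact absurd h3 (not_le.mpr (big j (by omega)))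
        have hℓ : 1 ≤ j - k ∧ j - k ≤ ℓ₀ := by omega
        have hp := (ha (j - k) hℓ.1 hℓ.2).1
        rw [show k + (j - k) = j from by omega] at hp
        have hμneg : μ (j - k) < 0 := by
          have hne' := hne (j - k) hℓ.1
          omega
        refine ⟨2 * k - j, ⟨by omega, by omega⟩, ?_⟩
        simp only [hf]
        rw [if_neg, show 2 * k - (2 * k - j) = j from by omega]
        push_neg
        constructor
        · omega
        · rw [show k - (2 * k - j) = j - k from by omega]
          omega
  constructor
  · rw [← himg]
    exact (Set.finite_Icc 1 (k - 1)).image f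
  · rw [← himg, Set.ncard_image_of_injOn hinj, ← Finset.coe_Icc,
      Set.ncard_coe_finset, Nat.card_Icc]
    omega
end

section
/- Let $n \geq 2$ be even, and let $(\mu_j)_{j\geq 1}$ be even integers with $d = 2sc$ even, $k > \ell_0 \geq 1$, satisfying: (a) $\mu_{k+\ell} = d + \mu_\ell$, $\mu_{k-\ell} = d - \mu_\ell$ for $1 \leq \ell \leq \ell_0$; (b) $\mu_{m+\ell} \geq \mu_m + n + 3$ for $m \geq 1$, $\ell \geq \ell_0$; (c) $|\hat\mu j - \mu_j| < n$ with $|\hat\mu k - d| < 1$. Let $c_0 = \#\{j \geq 1 : \mu_j = 0\}$ (finite, and all such $j \leq \ell_0$). Then $\#\{j \geq 1,\ j \neq k : \mu_j \leq d\} = k - 1 + c_0$. -/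
/-- Identity (eq:k_i2) of Appendix A, Case 2 (`n` even): with all indices even, zero-index
iterates are possible (all occurring for `j ≤ ℓ₀`), and the count of iterates `j ≠ k` with
`μ_j ≤ d` equals `k − 1 + c₀`, where `c₀` is the number of zero-index iterates. -/
theorem stmt_19 (n s c : ℕ) (hn : 2 ≤ n) (hneven : Even n) (hs : 1 ≤ s) (hc : 1 ≤ c)
    (μ : ℕ → ℤ) (μhat : ℝ) (d : ℤ) (k ℓ₀ : ℕ) (hℓ₀ : 1 ≤ ℓ₀) (hk : ℓ₀ < k)
    (hd : d = 2 * (s : ℤ) * (c : ℤ))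
    (heven : ∀ j : ℕ, 1 ≤ j → Even (μ j))
    (ha : ∀ ℓ : ℕ, 1 ≤ ℓ → ℓ ≤ ℓ₀ → μ (k + ℓ) = d + μ ℓ ∧ μ (k - ℓ) = d - μ ℓ)
    (hgrow : ∀ m ℓ : ℕ, 1 ≤ m → ℓ₀ ≤ ℓ → μ m + (n : ℤ) + 3 ≤ μ (m + ℓ))
    (hmean : ∀ j : ℕ, 1 ≤ j → |μhat * (j : ℝ) - (μ j : ℝ)| < n)
    (hmeank : |μhat * (k : ℝ) - (d : ℝ)| < 1)
    (hfin0 : {j : ℕ | 1 ≤ j ∧ μ j = 0}.Finite)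
    (hle0 : ∀ j : ℕ, 1 ≤ j → μ j = 0 → j ≤ ℓ₀) :
    {j : ℕ | 1 ≤ j ∧ j ≠ k ∧ μ j ≤ d}.Finite ∧
      {j : ℕ | 1 ≤ j ∧ j ≠ k ∧ μ j ≤ d}.ncard =
        k - 1 + {j : ℕ | 1 ≤ j ∧ μ j = 0}.ncard := by
  have hk1 : 1 ≤ k := le_trans hℓ₀ hk.le
  -- |μ k - d| < n + 1
  have hμk : |μ k - d| < (n : ℤ) + 1 := by
    have h1 := hmean k hk1
    have h2 := hmeank
    have h3 : |(μ k : ℝ) - (d : ℝ)| < (n : ℝ) + 1 := by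
      calc |(μ k : ℝ) - (d : ℝ)|
          ≤ |(μ k : ℝ) - μhat * k| + |μhat * k - (d : ℝ)| := abs_sub_le _ _ _
        _ < (n : ℝ) + 1 := by
            rw [abs_sub_comm] at h1; linarith
    have h4 : |((μ k - d : ℤ) : ℝ)| < ((n : ℤ) + 1 : ℤ) := by push_cast; exact h3
    exact_mod_cast h4
  have hμk1 : μ k < d + (n : ℤ) + 1 := by
    have := abs_lt.mp hμk; linarith [this.2]
  have hμk2 : d - (n : ℤ) - 1 < μ k := by
    have := abs_lt.mp hμk; linarith [this.1]
  -- small indices: μ j < d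
  have F2 : ∀ j : ℕ, 1 ≤ j → j + ℓ₀ ≤ k → μ j < d := by
    intro j hj hjk
    have h := hgrow j (k - j) hj (by omega)
    rw [show j + (k - j) = k by omega] at h
    linarith
  -- large indices: d < μ (k + ℓ) for ℓ ≥ ℓ₀
  have F3 : ∀ ℓ : ℕ, ℓ₀ ≤ ℓ → d < μ (k + ℓ) := by
    intro ℓ hℓ
    have h := hgrow k ℓ hk1 hℓ
    linarith
  have F5 : 0 < μ ℓ₀ := by
    have h := (ha ℓ₀ hℓ₀ le_rfl).1
    have := F3 ℓ₀ le_rfl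
    linarith
  -- the main finset
  set T : Finset ℕ :=
    (Finset.Icc 1 (k + ℓ₀ - 1)).filter (fun j => j ≠ k ∧ μ j ≤ d) with hT
  have hSet : {j : ℕ | 1 ≤ j ∧ j ≠ k ∧ μ j ≤ d} = ↑T := by
    ext j
    simp only [hT, Finset.coe_filter, Finset.mem_Icc, Set.mem_setOf_eq]
    constructor
    · rintro ⟨h1, h2, h3⟩
      refine ⟨⟨h1, ?_⟩, h2, h3⟩
      by_contra hcon
      have hj : k + ℓ₀ ≤ j := by omega
      have := F3 (j - k) (by omega)
      rw [show k + (j - k) = j by omega] at this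
      omega
    · rintro ⟨⟨h1, _⟩, h2, h3⟩; exact ⟨h1, h2, h3⟩
  -- auxiliary finsets
  set A : Finset ℕ := (Finset.Icc 1 (k - 1)).filter (fun j => μ j ≤ d) with hA
  set B : Finset ℕ := (Finset.Icc (k + 1) (k + ℓ₀ - 1)).filter (fun j => μ j ≤ d) with hB
  set N : Finset ℕ := (Finset.Icc 1 (ℓ₀ - 1)).filter (fun ℓ => μ ℓ < 0) with hN
  set Z : Finset ℕ := (Finset.Icc 1 (ℓ₀ - 1)).filter (fun ℓ => μ ℓ = 0) with hZ
  set Z' : Finset ℕ := (Finset.Icc 1 (ℓ₀ - 1)).filter (fun ℓ => μ ℓ ≤ 0) with hZ'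
  -- T = A ∪ B
  have hTAB : T = A ∪ B := by
    ext j
    simp only [hT, hA, hB, Finset.mem_union, Finset.mem_filter, Finset.mem_Icc]
    constructor
    · rintro ⟨⟨h1, h2⟩, h3, h4⟩
      rcases lt_or_gt_of_ne h3 with h | h
      · exact Or.inl ⟨⟨h1, by omega⟩, h4⟩
      · exact Or.inr ⟨⟨by omega, h2⟩, h4⟩
    · rintro (⟨⟨h1, h2⟩, h4⟩ | ⟨⟨h1, h2⟩, h4⟩)
      · exact ⟨⟨h1, by omega⟩, by omega, h4⟩
      · exact ⟨⟨by omega, h2⟩, by omega, h4⟩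
  have hABdisj : Disjoint A B := by
    rw [Finset.disjoint_left]
    intro j hj hj'
    simp only [hA, hB, Finset.mem_filter, Finset.mem_Icc] at hj hj'
    omega
  -- card of complement of A in Icc 1 (k-1) equals card N
  have hAc : ((Finset.Icc 1 (k - 1)).filter (fun j => ¬ μ j ≤ d)).card = N.card := by
    apply Finset.card_bij' (fun j _ => k - j) (fun ℓ _ => k - ℓ)
    · intro j hj
      simp only [Finset.mem_filter, Finset.mem_Icc, not_le] at hj
      obtain ⟨⟨h1, h2⟩, h3⟩ := hj
      have hlow : k - ℓ₀ < j := by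
        by_contra hcon
        have := F2 j h1 (by omega)
        omega
      have hmem : 1 ≤ k - j ∧ k - j ≤ ℓ₀ := by omega
      have hμ := (ha (k - j) hmem.1 hmem.2).2
      rw [show k - (k - j) = j by omega] at hμ
      simp only [hN, Finset.mem_filter, Finset.mem_Icc]
      have hne : k - j ≠ ℓ₀ := by
        intro h; rw [h] at hμ; omega
      exact ⟨⟨hmem.1, by omega⟩, by omega⟩
    · intro ℓ hℓ
      simp only [hN, Finset.mem_filter, Finset.mem_Icc] at hℓ
      obtain ⟨⟨h1, h2⟩, h3⟩ := hℓ
      have hμ := (ha ℓ h1 (by omega)).2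
      simp only [Finset.mem_filter, Finset.mem_Icc, not_le]
      exact ⟨⟨by omega, by omega⟩, by omega⟩
    · intro j hj
      simp only [Finset.mem_filter, Finset.mem_Icc] at hj
      omega
    · intro ℓ hℓ
      simp only [hN, Finset.mem_filter, Finset.mem_Icc] at hℓ
      omega
  -- card B = card Z'
  have hBZ : B.card = Z'.card := by
    apply Finset.card_bij' (fun j _ => j - k) (fun ℓ _ => k + ℓ)
    · intro j hj
      simp only [hB, Finset.mem_filter, Finset.mem_Icc] at hj
      obtain ⟨⟨h1, h2⟩, h3⟩ := hj
      have hmem : 1 ≤ j - k ∧ j - k ≤ ℓ₀ := by omega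
      have hμ := (ha (j - k) hmem.1 hmem.2).1
      rw [show k + (j - k) = j by omega] at hμ
      simp only [hZ', Finset.mem_filter, Finset.mem_Icc]
      exact ⟨⟨hmem.1, by omega⟩, by omega⟩
    · intro ℓ hℓ
      simp only [hZ', Finset.mem_filter, Finset.mem_Icc] at hℓ
      obtain ⟨⟨h1, h2⟩, h3⟩ := hℓ
      have hμ := (ha ℓ h1 (by omega)).1
      simp only [hB, Finset.mem_filter, Finset.mem_Icc]
      exact ⟨⟨by omega, by omega⟩, by omega⟩
    · intro j hj
      simp only [hB, Finset.mem_filter, Finset.mem_Icc] at hj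
      omega
    · intro ℓ hℓ
      omega
  -- Z' = N ∪ Z
  have hZ'NZ : Z'.card = N.card + Z.card := by
    rw [show Z' = N ∪ Z by
      ext ℓ
      simp only [hZ', hN, hZ, Finset.mem_union, Finset.mem_filter, Finset.mem_Icc]
      omega]
    apply Finset.card_union_of_disjoint
    rw [Finset.disjoint_left]
    intro ℓ h1 h2
    simp only [hN, hZ, Finset.mem_filter] at h1 h2
    omega
  -- zero set equals Z
  have hZset : {j : ℕ | 1 ≤ j ∧ μ j = 0} = ↑Z := by
    ext j
    simp only [hZ, Finset.coe_filter, Finset.mem_Icc, Set.mem_setOf_eq]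
    constructor
    · rintro ⟨h1, h2⟩
      have := hle0 j h1 h2
      have hne : j ≠ ℓ₀ := by intro h; rw [h] at h2; omega
      exact ⟨⟨h1, by omega⟩, h2⟩
    · rintro ⟨⟨h1, _⟩, h2⟩; exact ⟨h1, h2⟩
  -- card A
  have hAcard : A.card + N.card = k - 1 := by
    have h1 := Finset.card_filter_add_card_filter_not
      (s := Finset.Icc 1 (k - 1)) (p := fun j => μ j ≤ d)
    simp only [not_le] at h1 hAc
    rw [← hA, Nat.card_Icc] at h1
    omega
  -- conclude
  rw [hSet, hZset, Set.ncard_coe_finset, Set.ncard_coe_finset]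
  refine ⟨T.finite_toSet, ?_⟩
  rw [hTAB, Finset.card_union_of_disjoint hABdisj, hBZ, hZ'NZ]
  omega
end
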